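/- For each positive integer k, s(k) ≥ 2·s(r(k)), where r(k) is the reduction of k. -/

import Mathlib

/-- `Alist k` is the list `A_{k+1}`: `A_1 = [5]`, `A_{k+1} = A_k ++ A_k ++ [1]`. -/
def Alist : ℕ → List ℕ
  | 0 => [5]
  | k+1 => Alist k ++ Alist k ++ [1]

/-- `aseq n` is the `n`-th term (1-indexed) of the limit of the lists `A_k`;
`aseq 0 = 0` by convention. -/
def aseq (n : ℕ) : ℕ := (Alist n).getD (n - 1) 0

/-- Partial sums: `s n = a_1 + ⋯ + a_n`, `s 0 = 0`. -/
def s (n : ℕ) : ℕ := ∑ i ∈ Finset.Icc 1 n, aseq i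

/-- The largest `ℓ` with `2^ℓ - 1 ≤ n` (for `n ≥ 1`). -/
def maxM (n : ℕ) : ℕ := Nat.findGreatest (fun ℓ => 2 ^ ℓ - 1 ≤ n) n

/-- `Mdig n i` is the digit `ε_i` in the greedy M-expansion
`n = ε_1·M_1 + ⋯ + ε_ℓ·M_ℓ` (with `M_i = 2^i - 1`): repeatedly subtract the
largest Mersenne number `M_ℓ ≤ n`, recording a digit `2` if the remainder
equals `M_ℓ` again. -/
def Mdig (n : ℕ) : ℕ → ℕ :=
  if h : n = 0 then fun _ => 0
  else
    let ℓ := maxM n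
    let r := n - (2 ^ ℓ - 1)
    if r = 2 ^ ℓ - 1 then fun i => if i = ℓ then 2 else 0
    else fun i => (if i = ℓ then 1 else 0) + Mdig r i
termination_by n
decreasing_by
  have h1 : 1 ≤ maxM n :=
    Nat.le_findGreatest (Nat.one_le_iff_ne_zero.mpr h) (by simpa using Nat.one_le_iff_ne_zero.mpr h)
  have h2 : 2 ≤ 2 ^ maxM n := by
    calc (2 : ℕ) = 2 ^ 1 := rfl
    _ ≤ 2 ^ maxM n := Nat.pow_le_pow_right (by norm_num) h1
  have h3 : 1 ≤ n := Nat.one_le_iff_ne_zero.mpr h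
  omega

/-- Sum of the M-digits of `n` (all nonzero digits have index `≤ n`). -/
def sigmaM (n : ℕ) : ℕ := ∑ i ∈ Finset.Icc 1 n, Mdig n i

/-- The reduction `r(k) = ε_2·M_1 + ε_3·M_2 + ⋯`: the integer whose M-digit
list is the left shift of that of `k` (so `r 1 = r 2 = 0`). -/
def reduce (k : ℕ) : ℕ := ∑ i ∈ Finset.Icc 1 k, Mdig k (i + 1) * (2 ^ i - 1)

lemma Alist_length (m : ℕ) : (Alist m).length = 2 ^ (m+1) - 1 := by
  induction m with
  | zero => simp [Alist]
  | succ k ih =>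
    have h2 : 1 ≤ 2 ^ (k+1) := Nat.one_le_two_pow
    simp [Alist, ih, pow_succ]
    omega

lemma Alist_prefix {m m' : ℕ} (h : m ≤ m') : Alist m <+: Alist m' := by
  induction m' with
  | zero => simpa [Nat.le_zero.mp h]
  | succ k ih =>
    rcases Nat.le_succ_iff.mp h with h' | h'
    · refine (ih h').trans ?_
      show Alist k <+: Alist k ++ Alist k ++ [1]
      rw [List.append_assoc]
      exact List.prefix_append _ _
    · simp [h']

lemma aseq_eq {n m : ℕ} (h2 : n ≤ 2 ^ (m+1) - 1) :
    aseq n = (Alist m).getD (n - 1) 0 := by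
  unfold aseq
  rcases le_total n m with h | h
  · obtain ⟨t, ht⟩ := Alist_prefix h
    rw [← ht, List.getD_append]
    rw [Alist_length]
    have : 1 ≤ 2 ^ (n+1) := Nat.one_le_two_pow
    have : n < 2 ^ (n+1) - 1 := by
      have := Nat.lt_two_pow_self (n := n)
      have : 2 ^ n < 2 ^ (n + 1) := Nat.pow_lt_pow_right (by norm_num) (Nat.lt_succ_self n)
      omega
    omega
  · obtain ⟨t, ht⟩ := Alist_prefix h
    rw [← ht, List.getD_append]
    rw [Alist_length]
    have : 1 ≤ 2 ^ (m+1) := Nat.one_le_two_pow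
    omega

lemma two_pow_pos' (m : ℕ) : 1 ≤ 2 ^ m := Nat.one_le_two_pow

lemma aseq_shift {ℓ j : ℕ} (hℓ : 1 ≤ ℓ) (hj1 : 1 ≤ j) (hj2 : j ≤ 2 ^ ℓ - 1) :
    aseq (2 ^ ℓ - 1 + j) = aseq j := by
  obtain ⟨t, rfl⟩ := Nat.exists_eq_add_of_le hℓ
  have hM : (Alist t).length = 2 ^ (1 + t) - 1 := by rw [Alist_length, Nat.add_comm]
  have h1 : 1 ≤ 2 ^ (1 + t) := two_pow_pos' _
  have h2 : 2 ^ (1 + t + 1) = 2 * 2 ^ (1 + t) := by rw [pow_succ, Nat.mul_comm]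
  have hn : 2 ^ (1 + t) - 1 + j ≤ 2 ^ (1 + t + 1) - 1 := by omega
  have h4 : 2 ^ (1 + t) = 2 * 2 ^ t := by rw [pow_add, pow_one]
  rw [aseq_eq (m := 1 + t) hn, aseq_eq (m := t) (by omega)]
  have huf : Alist (1 + t) = Alist t ++ Alist t ++ [1] := by
    rw [Nat.add_comm]; rfl
  rw [huf, List.append_assoc, List.getD_append_right _ _ _ _ (by rw [hM]; omega),
    List.getD_append _ _ _ _ (by rw [hM]; omega), hM]
  congr 1
  omega

lemma aseq_top {ℓ : ℕ} (hℓ : 1 ≤ ℓ) : aseq (2 ^ (ℓ + 1) - 1) = 1 := by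
  have h1 : 1 ≤ 2 ^ (ℓ + 1) := two_pow_pos' _
  rw [aseq_eq (m := ℓ) le_rfl]
  obtain ⟨t, rfl⟩ := Nat.exists_eq_add_of_le hℓ
  have huf : Alist (1 + t) = Alist t ++ Alist t ++ [1] := by
    rw [Nat.add_comm]; rfl
  have hM : (Alist t).length = 2 ^ (1 + t) - 1 := by rw [Alist_length, Nat.add_comm]
  have h2 : 2 ^ (1 + t + 1) = 2 * 2 ^ (1 + t) := by rw [pow_succ, Nat.mul_comm]
  have h3 : 1 ≤ 2 ^ (1 + t) := two_pow_pos' _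
  rw [huf, List.getD_append_right _ _ _ _ (by simp [hM]; omega)]
  have hz : 2 ^ (1 + t + 1) - 1 - 1 - (Alist t ++ Alist t).length = 0 := by
    simp [hM]; omega
  rw [hz]
  rfl

lemma s_succ (n : ℕ) : s (n + 1) = s n + aseq (n + 1) := by
  unfold s
  rw [Finset.sum_Icc_succ_top (by omega)]

lemma s_add {ℓ x : ℕ} (hℓ : 1 ≤ ℓ) (hx : x ≤ 2 ^ ℓ - 1) :
    s (2 ^ ℓ - 1 + x) = s (2 ^ ℓ - 1) + s x := by
  induction x with
  | zero => simp [s]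
  | succ y ih =>
    have ha : 2 ^ ℓ - 1 + y + 1 = 2 ^ ℓ - 1 + (y + 1) := by omega
    rw [← Nat.add_assoc, s_succ, s_succ, ih (by omega), ha,
      aseq_shift hℓ (by omega) (by omega)]
    ring

lemma s_M {ℓ : ℕ} (hℓ : 1 ≤ ℓ) : s (2 ^ ℓ - 1) = 3 * 2 ^ ℓ - 1 := by
  induction ℓ with
  | zero => omega
  | succ t ih =>
    rcases Nat.eq_or_lt_of_le hℓ with h | h
    · have : (2:ℕ) ^ 1 - 1 = 1 := by norm_num
      rw [← h]
      norm_num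
      show s 1 = 5
      simp [s, aseq, Alist]
    · have ht : 1 ≤ t := by omega
      have h1 : 1 ≤ 2 ^ t := two_pow_pos' t
      have h2 : 2 ^ (t + 1) = 2 * 2 ^ t := by rw [pow_succ]; ring
      have key : 2 ^ (t+1) - 1 = (2 ^ t - 1 + (2 ^ t - 1)) + 1 := by omega
      rw [key, s_succ, ← key, aseq_top ht, s_add ht (by omega), ih ht]
      omega

lemma maxM_le (n : ℕ) : maxM n ≤ n := Nat.findGreatest_le n

lemma one_le_maxM {n : ℕ} (hn : 1 ≤ n) : 1 ≤ maxM n :=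
  Nat.le_findGreatest hn (by simpa using hn)

lemma maxM_spec {n : ℕ} (hn : 1 ≤ n) : 2 ^ maxM n - 1 ≤ n :=
  Nat.findGreatest_spec (P := fun ℓ => 2 ^ ℓ - 1 ≤ n) (m := 1) hn (by simpa using hn)

lemma maxM_ub {n : ℕ} (hn : 1 ≤ n) : n < 2 ^ (maxM n + 1) - 1 := by
  rcases Nat.lt_or_ge n (maxM n + 1) with h | h
  · have h1 : maxM n = n := le_antisymm (maxM_le n) (by omega)
    have h2 : n < 2 ^ n := Nat.lt_two_pow_self (n := n)
    have h3 : 2 ^ (n + 1) = 2 * 2 ^ n := by rw [pow_succ]; ring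
    rw [h1]; omega
  · have := Nat.findGreatest_is_greatest (P := fun ℓ => 2 ^ ℓ - 1 ≤ n)
      (n := n) (k := maxM n + 1) (Nat.lt_succ_self _) h
    simp only [not_le] at this
    exact this

lemma Mdig_unfold {n : ℕ} (h : n ≠ 0) : Mdig n =
    if n - (2 ^ maxM n - 1) = 2 ^ maxM n - 1 then (fun i => if i = maxM n then 2 else 0)
    else fun i => (if i = maxM n then 1 else 0) + Mdig (n - (2 ^ maxM n - 1)) i := by
  rw [Mdig]
  simp [h]

lemma maxM_mono {a b : ℕ} (h : a ≤ b) : maxM a ≤ maxM b :=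
  Nat.findGreatest_mono (fun ℓ hℓ => le_trans hℓ h) h

lemma Mdig_eq_zero : ∀ n, ∀ i, maxM n < i → Mdig n i = 0 := by
  intro n
  induction n using Nat.strong_induction_on with
  | _ n ih =>
    intro i hi
    rcases Nat.eq_zero_or_pos n with rfl | hn
    · rw [Mdig]; simp
    have hne : n ≠ 0 := by omega
    rw [Mdig_unfold hne]
    have h1 : 1 ≤ maxM n := one_le_maxM hn
    have h2 : 2 ^ maxM n - 1 ≤ n := maxM_spec hn
    have h3 : 2 ≤ 2 ^ maxM n := by
      calc (2:ℕ) = 2 ^ 1 := rfl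
      _ ≤ 2 ^ maxM n := Nat.pow_le_pow_right (by norm_num) h1
    split
    · simp only []
      rw [if_neg (by omega)]
    · simp only []
      rw [if_neg (by omega), ih (n - (2 ^ maxM n - 1)) (by omega) i
        (lt_of_le_of_lt (maxM_mono (by omega)) hi)]

lemma Mdig_eq_zero' {n i : ℕ} (h : n < i) : Mdig n i = 0 :=
  Mdig_eq_zero n i (lt_of_le_of_lt (maxM_le n) h)

lemma reduce_small {k : ℕ} (h : maxM k ≤ 1) : reduce k = 0 := by
  unfold reduce
  apply Finset.sum_eq_zero
  intro i hi
  rw [Mdig_eq_zero k (i+1) (by simp at hi; omega), Nat.zero_mul]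

lemma reduce_case2 {k : ℕ} (hk : 1 ≤ k) (hℓ : 2 ≤ maxM k)
    (h2 : k - (2 ^ maxM k - 1) = 2 ^ maxM k - 1) :
    reduce k = 2 * (2 ^ (maxM k - 1) - 1) := by
  unfold reduce
  rw [Finset.sum_eq_single (maxM k - 1)]
  · rw [Mdig_unfold (by omega), if_pos h2]
    rw [if_pos (by omega)]
  · intro b hb hbne
    rw [Mdig_unfold (by omega), if_pos h2]
    rw [if_neg (by simp at hb; omega), Nat.zero_mul]
  · intro habs
    have := maxM_le k
    exact absurd (Finset.mem_Icc.mpr ⟨by omega, by omega⟩) habs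

lemma reduce_case1 {k : ℕ} (hk : 1 ≤ k) (hℓ : 2 ≤ maxM k)
    (h2 : k - (2 ^ maxM k - 1) ≠ 2 ^ maxM k - 1) :
    reduce k = (2 ^ (maxM k - 1) - 1) + reduce (k - (2 ^ maxM k - 1)) := by
  have hM : 2 ^ maxM k - 1 ≤ k := maxM_spec hk
  set r := k - (2 ^ maxM k - 1) with hr
  have hrk : r ≤ k := by omega
  unfold reduce
  have hdig : ∀ i, Mdig k (i + 1) = (if i + 1 = maxM k then 1 else 0) + Mdig r (i + 1) := by
    intro i
    rw [Mdig_unfold (by omega), if_neg h2]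
  simp only [hdig, Nat.add_mul]
  rw [Finset.sum_add_distrib]
  congr 1
  · rw [Finset.sum_eq_single (maxM k - 1)]
    · rw [if_pos (by omega), Nat.one_mul]
    · intro b hb hbne
      rw [if_neg (by simp at hb; omega), Nat.zero_mul]
    · intro habs
      have := maxM_le k
      exact absurd (Finset.mem_Icc.mpr ⟨by omega, by omega⟩) habs
  · symm
    apply Finset.sum_subset
    · intro i hi
      simp at hi ⊢
      omega
    · intro i hik hir
      have : r < i + 1 := by simp at hik hir; omega
      rw [Mdig_eq_zero' this, Nat.zero_mul]

lemma reduce_zero : reduce 0 = 0 := by simp [reduce]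

lemma s_zero : s 0 = 0 := by simp [s]

lemma maxM_lt_of_lt {r ℓ : ℕ} (hr : 1 ≤ r) (h : r < 2 ^ ℓ - 1) : maxM r < ℓ := by
  have h1 : 2 ^ maxM r - 1 ≤ r := maxM_spec hr
  have h2 : 2 ^ maxM r < 2 ^ ℓ := by
    have : 1 ≤ 2 ^ maxM r := two_pow_pos' _
    omega
  exact (Nat.pow_lt_pow_iff_right (by norm_num)).mp h2

lemma reduce_le : ∀ n, 1 ≤ n → reduce n ≤ 2 ^ maxM n - 1 := by
  intro n
  induction n using Nat.strong_induction_on with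
  | _ n ih =>
    intro hn
    rcases Nat.lt_or_ge (maxM n) 2 with hℓ | hℓ
    · rw [reduce_small (by omega)]; omega
    have hM : 2 ^ maxM n - 1 ≤ n := maxM_spec hn
    have hub : n < 2 ^ (maxM n + 1) - 1 := maxM_ub hn
    have p2 : 2 ^ (maxM n + 1) = 2 * 2 ^ maxM n := by rw [pow_succ]; ring
    have p1 : 2 ^ (maxM n - 1 + 1) = 2 * 2 ^ (maxM n - 1) := by rw [pow_succ]; ring
    have p1' : maxM n - 1 + 1 = maxM n := by omega
    rw [p1'] at p1
    have p0 : 1 ≤ 2 ^ (maxM n - 1) := two_pow_pos' _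
    by_cases h2 : n - (2 ^ maxM n - 1) = 2 ^ maxM n - 1
    · rw [reduce_case2 hn hℓ h2]; omega
    · rw [reduce_case1 hn hℓ h2]
      set r := n - (2 ^ maxM n - 1) with hr
      have hrM : r < 2 ^ maxM n - 1 := by omega
      rcases Nat.eq_zero_or_pos r with h0 | h0
      · rw [h0, reduce_zero]; omega
      · have hmr : maxM r < maxM n := maxM_lt_of_lt h0 hrM
        have := ih r (by omega) h0
        have : 2 ^ maxM r ≤ 2 ^ (maxM n - 1) :=
          Nat.pow_le_pow_right (by norm_num) (by omega)
        have h1r : 1 ≤ 2 ^ maxM r := two_pow_pos' _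
        omega

/-- For each positive integer `k`, `s(k) ≥ 2·s(r(k))`. -/
theorem s_ge_two_s_reduce (k : ℕ) (hk : 1 ≤ k) :
    2 * s (reduce k) ≤ s k := by
  induction k using Nat.strong_induction_on with
  | _ k ih =>
    rcases Nat.lt_or_ge (maxM k) 2 with hℓ | hℓ
    · rw [reduce_small (by omega), s_zero]
      omega
    have hM : 2 ^ maxM k - 1 ≤ k := maxM_spec hk
    have hub : k < 2 ^ (maxM k + 1) - 1 := maxM_ub hk
    have p2 : 2 ^ (maxM k + 1) = 2 * 2 ^ maxM k := by rw [pow_succ]; ring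
    have p1 : 2 ^ (maxM k - 1 + 1) = 2 * 2 ^ (maxM k - 1) := by rw [pow_succ]; ring
    have p1' : maxM k - 1 + 1 = maxM k := by omega
    rw [p1'] at p1
    have p0 : 1 ≤ 2 ^ (maxM k - 1) := two_pow_pos' _
    have sM : s (2 ^ maxM k - 1) = 3 * 2 ^ maxM k - 1 := s_M (by omega)
    have sM' : s (2 ^ (maxM k - 1) - 1) = 3 * 2 ^ (maxM k - 1) - 1 := s_M (by omega)
    by_cases h2 : k - (2 ^ maxM k - 1) = 2 ^ maxM k - 1
    · rw [reduce_case2 hk hℓ h2]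
      have hkeq : k = 2 ^ maxM k - 1 + (2 ^ maxM k - 1) := by omega
      have e1 : 2 * (2 ^ (maxM k - 1) - 1) = 2 ^ (maxM k - 1) - 1 + (2 ^ (maxM k - 1) - 1) := by
        omega
      have hsk : s k = 3 * 2 ^ maxM k - 1 + (3 * 2 ^ maxM k - 1) := by
        conv_lhs => rw [hkeq]
        rw [s_add (by omega) le_rfl, sM]
      rw [e1, s_add (by omega) le_rfl, sM', hsk]
      omega
    · rw [reduce_case1 hk hℓ h2]
      set r := k - (2 ^ maxM k - 1) with hr
      have hrM : r < 2 ^ maxM k - 1 := by omega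
      have hred : reduce r ≤ 2 ^ (maxM k - 1) - 1 := by
        rcases Nat.eq_zero_or_pos r with h0 | h0
        · rw [h0, reduce_zero]; omega
        · have hmr : maxM r < maxM k := maxM_lt_of_lt h0 hrM
          have := reduce_le r h0
          have : 2 ^ maxM r ≤ 2 ^ (maxM k - 1) :=
            Nat.pow_le_pow_right (by norm_num) (by omega)
          have h1r : 1 ≤ 2 ^ maxM r := two_pow_pos' _
          omega
      have hIH : 2 * s (reduce r) ≤ s r := by
        rcases Nat.eq_zero_or_pos r with h0 | h0
        · rw [h0, reduce_zero, s_zero]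
        · exact ih r (by omega) h0
      have hkeq : k = 2 ^ maxM k - 1 + r := by omega
      have hsk : s k = 3 * 2 ^ maxM k - 1 + s r := by
        conv_lhs => rw [hkeq]
        rw [s_add (by omega) (by omega), sM]
      rw [s_add (by omega) hred, sM', hsk]
      omega
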